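/- If F = (P|u) acts on functions by (F f)(ξ) = f(P^{-1}(ξ − u)) with P ∈ GL_g(Z) orthogonal-free (arbitrary invertible integer matrix) and u ∈ Q^g, then the theta function with rational characteristics transforms as F[ϑ[w,0](k − Ωξ | Ω)] = exp(−iπ uᵀΩ̃u) · exp(−2πi uᵀ(P^{-T}k − Ω̃ξ)) · ϑ[Pw + u, 0](P^{-T}k − Ω̃ξ | Ω̃), where Ω̃ = P^{-T} Ω P^{-1}. -/

import Mathlib

open Matrix Complex

noncomputable def zc {g : ℕ} (n : Fin g → ℤ) : Fin g → ℂ := fun i => (n i : ℂ)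

noncomputable def rc {g : ℕ} (x : Fin g → ℝ) : Fin g → ℂ := fun i => (x i : ℂ)

/-- Riemann theta function `ϑ(z|Ω) = Σ_{n ∈ ℤ^g} exp(iπ nᵀΩn + 2πi nᵀz)`. -/
noncomputable def riemannTheta {g : ℕ} (Ω : Matrix (Fin g) (Fin g) ℂ) (z : Fin g → ℂ) : ℂ :=
  ∑' n : Fin g → ℤ,
    Complex.exp (Real.pi * Complex.I * (zc n ⬝ᵥ Ω.mulVec (zc n)) +
      2 * Real.pi * Complex.I * (zc n ⬝ᵥ z))

/-- Theta function with characteristics `ϑ[a,b](z|Ω)`. -/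
noncomputable def thetaChar {g : ℕ} (Ω : Matrix (Fin g) (Fin g) ℂ) (a b z : Fin g → ℂ) : ℂ :=
  Complex.exp (Real.pi * Complex.I * (a ⬝ᵥ Ω.mulVec a) +
    2 * Real.pi * Complex.I * (a ⬝ᵥ (z + b))) *
  riemannTheta Ω (z + Ω.mulVec a + b)

/-- `s`-type Bloch function `φ_k(ξ | w, Ω)`. -/
noncomputable def blochS {g : ℕ} (Ω : Matrix (Fin g) (Fin g) ℂ) (k w ξ : Fin g → ℂ) : ℂ :=
  Complex.exp (Real.pi * Complex.I * (ξ ⬝ᵥ Ω.mulVec ξ)) *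
  Complex.exp (-(2 * Real.pi * Complex.I) * (w ⬝ᵥ k)) *
  thetaChar Ω w 0 (k - Ω.mulVec ξ)

/-! ### Auxiliary lemmas -/

lemma dot_shift {g : ℕ} (M : Matrix (Fin g) (Fin g) ℂ) (x z : Fin g → ℂ) :
    (M.mulVec x) ⬝ᵥ z = x ⬝ᵥ (Mᵀ.mulVec z) := by
  rw [dotProduct_comm, dotProduct_mulVec, dotProduct_comm, mulVec_transpose]

noncomputable def mulVecEquiv {g : ℕ} (P : Matrix (Fin g) (Fin g) ℤ) (hP : IsUnit P.det) :
    (Fin g → ℤ) ≃ (Fin g → ℤ) where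
  toFun := P.mulVec
  invFun := (P⁻¹).mulVec
  left_inv x := by
    rw [Matrix.mulVec_mulVec, Matrix.nonsing_inv_mul _ hP, Matrix.one_mulVec]
  right_inv x := by
    rw [Matrix.mulVec_mulVec, Matrix.mul_nonsing_inv _ hP, Matrix.one_mulVec]

lemma riemannTheta_reindex {g : ℕ} (Ω : Matrix (Fin g) (Fin g) ℂ)
    (P : Matrix (Fin g) (Fin g) ℤ) (hP : IsUnit P.det)
    (Pc : Matrix (Fin g) (Fin g) ℂ) (hPc : Pc = P.map fun x => (x : ℂ))
    (Ωt : Matrix (Fin g) (Fin g) ℂ) (hΩt : Ωt = (Pc⁻¹)ᵀ * Ω * Pc⁻¹)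
    (z : Fin g → ℂ) :
    riemannTheta Ωt z = riemannTheta Ω (Pcᵀ.mulVec z) := by
  have hPcdet : IsUnit Pc.det := by
    have h := hP.map (Int.castRingHom ℂ)
    rw [RingHom.map_det] at h
    convert h using 2
    exact hPc
  have hz : ∀ m : Fin g → ℤ, zc (P.mulVec m) = Pc.mulVec (zc m) := by
    intro m; funext i
    simp only [zc, hPc, Matrix.mulVec, dotProduct, Matrix.map_apply]
    push_cast; rfl
  have h1 : Pc⁻¹ * Pc = 1 := nonsing_inv_mul _ hPcdet
  have hmat : Pcᵀ * Ωt * Pc = Ω := by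
    rw [hΩt, Matrix.transpose_nonsing_inv]
    calc Pcᵀ * (Pcᵀ⁻¹ * Ω * Pc⁻¹) * Pc = Pcᵀ * Pcᵀ⁻¹ * Ω * (Pc⁻¹ * Pc) := by
          noncomm_ring
      _ = Ω := by
          rw [h1, mul_nonsing_inv _ (by rwa [Matrix.det_transpose]), mul_one, one_mul]
  unfold riemannTheta
  rw [← Equiv.tsum_eq (mulVecEquiv P hP)]
  congr 1; funext m
  have hquad : (Pc.mulVec (zc m)) ⬝ᵥ Ωt.mulVec (Pc.mulVec (zc m)) = zc m ⬝ᵥ Ω.mulVec (zc m) := by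
    rw [dot_shift, Matrix.mulVec_mulVec, Matrix.mulVec_mulVec, hmat]
  simp only [mulVecEquiv, Equiv.coe_fn_mk, hz]
  rw [hquad, dot_shift]

/-- transformation of the theta function with rational characteristics
under a space-group operation `F = (P|u)`, `(F f)(ξ) = f(P⁻¹(ξ − u))`. -/
theorem thetaChar_spaceGroup_action {g : ℕ} (Ω : Matrix (Fin g) (Fin g) ℂ)
    (hsym : Ωᵀ = Ω) (hpos : (Ω.map Complex.im).PosDef)
    (P : Matrix (Fin g) (Fin g) ℤ) (hP : IsUnit P.det) (u : Fin g → ℚ)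
    (w k ξ : Fin g → ℝ)
    (Pc : Matrix (Fin g) (Fin g) ℂ) (hPc : Pc = P.map fun x => (x : ℂ))
    (uc : Fin g → ℂ) (huc : uc = fun i => ((u i : ℚ) : ℂ))
    (Ωt : Matrix (Fin g) (Fin g) ℂ) (hΩt : Ωt = (Pc⁻¹)ᵀ * Ω * Pc⁻¹) :
    thetaChar Ω (rc w) 0 (rc k - Ω.mulVec (Pc⁻¹.mulVec (rc ξ - uc))) =
      Complex.exp (-(Real.pi * Complex.I) * (uc ⬝ᵥ Ωt.mulVec uc)) *
      Complex.exp (-(2 * Real.pi * Complex.I) *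
        (uc ⬝ᵥ ((Pcᵀ)⁻¹.mulVec (rc k) - Ωt.mulVec (rc ξ)))) *
      thetaChar Ωt (Pc.mulVec (rc w) + uc) 0
        ((Pcᵀ)⁻¹.mulVec (rc k) - Ωt.mulVec (rc ξ)) := by
  have hPcdet : IsUnit Pc.det := by
    have h := hP.map (Int.castRingHom ℂ)
    rw [RingHom.map_det] at h
    convert h using 2
    exact hPc
  have hPtdet : IsUnit Pcᵀ.det := by rwa [Matrix.det_transpose]
  have h1 : Pc⁻¹ * Pc = 1 := nonsing_inv_mul _ hPcdet
  have h3 : Pcᵀ * Pcᵀ⁻¹ = 1 := mul_nonsing_inv _ hPtdet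
  have hΩts : Ωtᵀ = Ωt := by
    rw [hΩt]
    simp [Matrix.transpose_mul, Matrix.transpose_transpose, hsym, Matrix.mul_assoc]
  have hPtΩt : Pcᵀ * Ωt = Ω * Pc⁻¹ := by
    rw [hΩt, Matrix.transpose_nonsing_inv]
    calc Pcᵀ * (Pcᵀ⁻¹ * Ω * Pc⁻¹) = Pcᵀ * Pcᵀ⁻¹ * Ω * Pc⁻¹ := by noncomm_ring
      _ = Ω * Pc⁻¹ := by rw [h3, one_mul]
  have hmat : Pcᵀ * Ωt * Pc = Ω := by
    rw [hPtΩt, Matrix.mul_assoc, h1, Matrix.mul_one]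
  have hPtmul : ∀ v, Pcᵀ.mulVec (Ωt.mulVec v) = Ω.mulVec (Pc⁻¹.mulVec v) := by
    intro v
    rw [Matrix.mulVec_mulVec, hPtΩt, ← Matrix.mulVec_mulVec]
  have hPk : Pcᵀ.mulVec ((Pcᵀ)⁻¹.mulVec (rc k)) = rc k := by
    rw [Matrix.mulVec_mulVec, h3, Matrix.one_mulVec]
  have hPinvP : ∀ v : Fin g → ℂ, Pc⁻¹.mulVec (Pc.mulVec v) = v := by
    intro v
    rw [Matrix.mulVec_mulVec, h1, Matrix.one_mulVec]
  have hsymdot : ∀ x y : Fin g → ℂ, x ⬝ᵥ Ωt.mulVec y = y ⬝ᵥ Ωt.mulVec x := by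
    intro x y
    rw [dotProduct_comm, dot_shift, hΩts]
  set zt : Fin g → ℂ := (Pcᵀ)⁻¹.mulVec (rc k) - Ωt.mulVec (rc ξ) with hzt
  set zL : Fin g → ℂ := rc k - Ω.mulVec (Pc⁻¹.mulVec (rc ξ - uc)) with hzL
  set a : Fin g → ℂ := Pc.mulVec (rc w) + uc with ha
  have hPtzt : Pcᵀ.mulVec zt = rc k - Ω.mulVec (Pc⁻¹.mulVec (rc ξ)) := by
    rw [hzt, Matrix.mulVec_sub, hPk, hPtmul]
  have harg : Pcᵀ.mulVec (zt + Ωt.mulVec a + 0) = zL + Ω.mulVec (rc w) + 0 := by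
    simp only [add_zero, Matrix.mulVec_add, hPtzt, hPtmul, hzL, ha, Matrix.mulVec_sub, hPinvP]
    abel
  -- the three scalar identities
  have t1 : (Pc.mulVec (rc w)) ⬝ᵥ Ωt.mulVec (Pc.mulVec (rc w)) = rc w ⬝ᵥ Ω.mulVec (rc w) := by
    rw [dot_shift, Matrix.mulVec_mulVec, Matrix.mulVec_mulVec, hmat]
  have t2 : (Pc.mulVec (rc w)) ⬝ᵥ Ωt.mulVec uc = rc w ⬝ᵥ Ω.mulVec (Pc⁻¹.mulVec uc) := by
    rw [dot_shift, hPtmul]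
  have t3 : uc ⬝ᵥ Ωt.mulVec (Pc.mulVec (rc w)) = rc w ⬝ᵥ Ω.mulVec (Pc⁻¹.mulVec uc) := by
    rw [hsymdot, t2]
  have q1 : a ⬝ᵥ Ωt.mulVec a =
      rc w ⬝ᵥ Ω.mulVec (rc w) + 2 * (rc w ⬝ᵥ Ω.mulVec (Pc⁻¹.mulVec uc)) +
        uc ⬝ᵥ Ωt.mulVec uc := by
    simp only [ha, Matrix.mulVec_add, dotProduct_add, add_dotProduct, t1, t2, t3]
    ring
  have q2 : a ⬝ᵥ zt =
      rc w ⬝ᵥ rc k - rc w ⬝ᵥ Ω.mulVec (Pc⁻¹.mulVec (rc ξ)) + uc ⬝ᵥ zt := by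
    rw [ha, add_dotProduct, dot_shift, hPtzt, dotProduct_sub]
  have q3 : rc w ⬝ᵥ zL =
      rc w ⬝ᵥ rc k - rc w ⬝ᵥ Ω.mulVec (Pc⁻¹.mulVec (rc ξ)) +
        rc w ⬝ᵥ Ω.mulVec (Pc⁻¹.mulVec uc) := by
    simp only [hzL, Matrix.mulVec_sub, dotProduct_sub]
    ring
  have hexp : Complex.exp (Real.pi * Complex.I * (rc w ⬝ᵥ Ω.mulVec (rc w)) +
        2 * Real.pi * Complex.I * (rc w ⬝ᵥ (zL + 0))) =
      Complex.exp (-(Real.pi * Complex.I) * (uc ⬝ᵥ Ωt.mulVec uc)) *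
      Complex.exp (-(2 * Real.pi * Complex.I) * (uc ⬝ᵥ zt)) *
      Complex.exp (Real.pi * Complex.I * (a ⬝ᵥ Ωt.mulVec a) +
        2 * Real.pi * Complex.I * (a ⬝ᵥ (zt + 0))) := by
    rw [← Complex.exp_add, ← Complex.exp_add]
    congr 1
    simp only [add_zero, q1, q2, q3]
    ring
  unfold thetaChar
  rw [riemannTheta_reindex Ω P hP Pc hPc Ωt hΩt, harg, hexp]
  ring
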